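/- arXiv:0803.0302 — 2 statements merged into one kernel-verified Lean document; each statement's English description precedes it below -/
import Mathlib

section
/- lim_{n→∞} cp(n,n,1)/cp(n,n,0) = 2e - 3, where cp(n,n,k) is the number of assignments of n drivers to n spaces with exactly k drivers failing to park; in particular cp(n,n,0) = (n+1)^(n-1). -/
open Finset

/-- One step of the linear parking process: the driver with choice `c` takes the
first free space with index at least `c`, if any; otherwise the failure count increases. -/
def parkStep {n : ℕ} (p : Finset (Fin n) × ℕ) (c : Fin n) : Finset (Fin n) × ℕ :=
  if h : ((Finset.univ \ p.1).filter (fun x => c ≤ x)).Nonempty then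
    (insert (((Finset.univ \ p.1).filter (fun x => c ≤ x)).min' h) p.1, p.2)
  else
    (p.1, p.2 + 1)

/-- The set of occupied spaces and the number of drivers who fail to park,
when drivers `0, 1, ..., m-1` with choices `f 0, f 1, ..., f (m-1)` arrive in order. -/
def parkRun {n m : ℕ} (f : Fin m → Fin n) : Finset (Fin n) × ℕ :=
  (List.ofFn f).foldl parkStep (∅, 0)

/-- The defect of an assignment: the number of drivers who fail to park. -/
def defect {n m : ℕ} (f : Fin m → Fin n) : ℕ := (parkRun f).2

/-- `cp n m k` is the number of assignments of `m` drivers to `n` spaces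
under which exactly `k` drivers fail to park. -/
def cp (n m k : ℕ) : ℕ :=
  (Finset.univ.filter (fun f : Fin m → Fin n => defect f = k)).card
namespace Stmt18
open Finset
open Fin.NatCast Fin.CommRing

variable {m : ℕ}

def fr (S : Finset (Fin m)) (c : Fin m) : Finset (Fin m) := (Finset.univ \ S).filter (fun x => c ≤ x)

lemma mem_fr {S : Finset (Fin m)} {c x : Fin m} : x ∈ fr S c ↔ x ∉ S ∧ c ≤ x := by
  simp [fr]

lemma parkStep_eq (p : Finset (Fin m) × ℕ) (c : Fin m) :
    parkStep p c = if h : (fr p.1 c).Nonempty then (insert ((fr p.1 c).min' h) p.1, p.2)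
      else (p.1, p.2 + 1) := rfl

lemma parkStep_snd_le (p : Finset (Fin m) × ℕ) (c : Fin m) : p.2 ≤ (parkStep p c).2 := by
  rw [parkStep_eq]; split_ifs <;> simp

lemma parkStep_congr {p : Finset (Fin m) × ℕ} {a b : Fin m} (h : fr p.1 b = fr p.1 a) :
    parkStep p b = parkStep p a := by
  rw [parkStep_eq, parkStep_eq, h]

lemma fr_insert (S : Finset (Fin m)) (q c : Fin m) :
    fr (insert q S) c = (fr S c).erase q := by
  ext x; simp [mem_fr, Finset.mem_erase]; tauto

lemma fr_subset_fr {a b : Fin m} (hab : a ≤ b) (S : Finset (Fin m)) : fr S b ⊆ fr S a := by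
  intro x hx; rw [mem_fr] at *; exact ⟨hx.1, le_trans hab hx.2⟩


lemma step_comm_aux (S : Finset (Fin m)) (d : ℕ) (a b : Fin m) (hab : a ≤ b) :
    parkStep (parkStep (S, d) a) b = parkStep (parkStep (S, d) b) a := by
  have hsub : fr S b ⊆ fr S a := fr_subset_fr hab S
  by_cases ha : (fr S a).Nonempty
  · set qa := (fr S a).min' ha with hqa_def
    have hqa_mem : qa ∈ fr S a := Finset.min'_mem _ _
    rw [parkStep_eq (S, d) a, dif_pos ha]
    by_cases hb : (fr S b).Nonempty
    · set qb := (fr S b).min' hb with hqb_def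
      have hqb_mem : qb ∈ fr S b := Finset.min'_mem _ _
      have hqab : qa ≤ qb := Finset.min'_le _ _ (hsub hqb_mem)
      rw [parkStep_eq (S, d) b, dif_pos hb]
      rcases lt_or_eq_of_le hqab with hlt | heq
      · -- qa < qb
        have hqa_notb : qa ∉ fr S b := fun h => absurd (Finset.min'_le _ _ h) (not_le.mpr hlt)
        -- after a parks at qa, b still sees fr S b
        have h1 : fr (insert qa S) b = fr S b := by
          rw [fr_insert]; exact Finset.erase_eq_of_notMem hqa_notb
        have h2 : fr (insert qb S) a = (fr S a).erase qb := fr_insert _ _ _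
        have h2ne : ((fr S a).erase qb).Nonempty := ⟨qa, Finset.mem_erase.mpr ⟨ne_of_lt hlt, hqa_mem⟩⟩
        have h2min : ((fr S a).erase qb).min' h2ne = qa := by
          apply le_antisymm
          · exact Finset.min'_le _ _ (Finset.mem_erase.mpr ⟨ne_of_lt hlt, hqa_mem⟩)
          · exact Finset.le_min' _ _ _ fun y hy => Finset.min'_le _ _ (Finset.mem_erase.mp hy).2
        simp only [parkStep_eq]
        rw [dif_pos (by rw [h1]; exact hb), dif_pos (by rw [h2]; exact h2ne)]
        have e1 : ((fr (insert qa S) b).min' (by rw [h1]; exact hb)) = qb := by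
          congr 1 <;> rw [h1]
        have e2 : ((fr (insert qb S) a).min' (by rw [h2]; exact h2ne)) = qa := by
          rw [← h2min]; congr 1 <;> rw [h2]
        rw [e1, e2, Finset.insert_comm]
      · -- qa = qb : the two free-sets coincide
        have hfeq : fr S a = fr S b := by
          apply Finset.Subset.antisymm _ hsub
          intro x hx
          rcases mem_fr.mp hx with ⟨hxS, hax⟩
          rcases le_or_gt b x with hbx | hxb
          · exact mem_fr.mpr ⟨hxS, hbx⟩
          · exfalso
            have : qa ≤ x := Finset.min'_le _ _ hx
            have : qb ≤ x := heq ▸ this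
            have : b ≤ x := le_trans (mem_fr.mp hqb_mem).2 this
            exact absurd this (not_le.mpr hxb)
        have hq : (fr S a).min' ha = (fr S b).min' hb := by congr 1
        show parkStep (insert ((fr S a).min' ha) S, d) b = parkStep (insert ((fr S b).min' hb) S, d) a
        rw [← hq]
        apply parkStep_congr
        show fr (insert ((fr S a).min' ha) S) b = fr (insert ((fr S a).min' ha) S) a
        rw [fr_insert, fr_insert]
        exact congrFun (congrArg Finset.erase hfeq.symm) _
      -- done both subcases
    · -- fr S b empty: b fails both times
      have hqa_b : qa ∉ fr S b := by rw [Finset.not_nonempty_iff_eq_empty.mp hb]; exact Finset.notMem_empty _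
      rw [parkStep_eq (S,d) b, dif_neg hb]
      simp only [parkStep_eq]
      have h1 : fr (insert qa S) b = ∅ := by
        rw [fr_insert, Finset.not_nonempty_iff_eq_empty.mp hb, Finset.erase_empty]
      rw [dif_neg (by rw [h1]; exact Finset.not_nonempty_empty), dif_pos ha]
  · -- fr S a empty, hence fr S b empty
    have hb : ¬ (fr S b).Nonempty := fun h => ha (h.mono hsub)
    rw [parkStep_eq (S,d) a, dif_neg ha, parkStep_eq (S,d) b, dif_neg hb]
    simp only [parkStep_eq]
    rw [dif_neg hb, dif_neg ha]

lemma step_comm (p : Finset (Fin m) × ℕ) (a b : Fin m) :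
    parkStep (parkStep p a) b = parkStep (parkStep p b) a := by
  obtain ⟨S, d⟩ := p
  rcases le_total a b with h | h
  · exact step_comm_aux S d a b h
  · exact (step_comm_aux S d b a h).symm

instance : RightCommutative (parkStep (n := m)) := ⟨fun p a b => step_comm p a b⟩


/-- transport of states to a world with one extra top parking spot -/
def Phi (p : Finset (Fin m) × ℕ) : Finset (Fin (m + 1)) × ℕ :=
  (p.1.image Fin.castSucc ∪ (if 1 ≤ p.2 then {Fin.last m} else ∅), p.2 - 1)

lemma mem_phi_fst {p : Finset (Fin m) × ℕ} {x : Fin (m+1)} :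
    x ∈ (Phi p).1 ↔ (∃ y ∈ p.1, Fin.castSucc y = x) ∨ (1 ≤ p.2 ∧ x = Fin.last m) := by
  simp only [Phi, mem_union, mem_image]
  split_ifs with h <;> simp [h]

lemma fr_phi_of_pos {S : Finset (Fin m)} {d : ℕ} (hd : 1 ≤ d) (c : Fin m) :
    fr (Phi (S, d)).1 (Fin.castSucc c) = (fr S c).image Fin.castSucc := by
  ext x
  simp only [mem_fr, mem_image, mem_phi_fst]
  constructor
  · rintro ⟨hnot, hle⟩
    rcases Fin.eq_castSucc_or_eq_last x with ⟨y, rfl⟩ | rfl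
    · exact ⟨y, ⟨fun hy => hnot (Or.inl ⟨y, hy, rfl⟩), Fin.castSucc_le_castSucc_iff.mp hle⟩, rfl⟩
    · exact absurd (Or.inr ⟨hd, rfl⟩) hnot
  · rintro ⟨y, hy, rfl⟩
    rcases hy with ⟨hyS, hcy⟩
    refine ⟨?_, Fin.castSucc_le_castSucc_iff.mpr hcy⟩
    rintro (⟨z, hz, hzy⟩ | ⟨-, hlast⟩)
    · exact hyS (by rwa [Fin.castSucc_inj.mp hzy] at hz)
    · exact absurd hlast (Fin.ne_of_lt (Fin.castSucc_lt_last y))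

lemma fr_phi_of_zero {S : Finset (Fin m)} (c : Fin m) :
    fr (Phi (S, 0)).1 (Fin.castSucc c) = insert (Fin.last m) ((fr S c).image Fin.castSucc) := by
  ext x
  simp only [mem_fr, mem_image, mem_phi_fst, mem_insert]
  constructor
  · rintro ⟨hnot, hle⟩
    rcases Fin.eq_castSucc_or_eq_last x with ⟨y, rfl⟩ | rfl
    · exact Or.inr ⟨y, ⟨fun hy => hnot (Or.inl ⟨y, hy, rfl⟩), Fin.castSucc_le_castSucc_iff.mp hle⟩, rfl⟩
    · exact Or.inl rfl
  · rintro (rfl | ⟨y, hy, rfl⟩)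
    · refine ⟨?_, Fin.le_last _⟩
      rintro (⟨z, hz, hzy⟩ | ⟨h0, -⟩)
      · exact absurd hzy (Fin.ne_of_lt (Fin.castSucc_lt_last z))
      · omega
    · rcases hy with ⟨hyS, hcy⟩
      refine ⟨?_, Fin.castSucc_le_castSucc_iff.mpr hcy⟩
      rintro (⟨z, hz, hzy⟩ | ⟨h0, -⟩)
      · exact hyS (by rwa [Fin.castSucc_inj.mp hzy] at hz)
      · omega

lemma phi_step (p : Finset (Fin m) × ℕ) (c : Fin m) :
    parkStep (Phi p) (Fin.castSucc c) = Phi (parkStep p c) := by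
  obtain ⟨S, d⟩ := p
  by_cases hne : (fr S c).Nonempty
  · set q := (fr S c).min' hne with hq
    have hstep : parkStep (S, d) c = (insert q S, d) := by rw [parkStep_eq, dif_pos hne]
    rcases Nat.eq_zero_or_pos d with rfl | hd
    · -- d = 0
      have hfr := fr_phi_of_zero (S := S) c
      have hne' : (fr (Phi (S, 0)).1 (Fin.castSucc c)).Nonempty := by
        rw [hfr]; exact insert_nonempty _ _
      have hmin : (fr (Phi (S, 0)).1 (Fin.castSucc c)).min' hne' = Fin.castSucc q := by
        apply le_antisymm
        · exact min'_le _ _ (by rw [hfr]; exact mem_insert_of_mem (mem_image_of_mem _ (min'_mem _ hne)))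
        · apply le_min'
          intro y hy
          rw [hfr, mem_insert] at hy
          rcases hy with rfl | hy
          · exact le_of_lt (Fin.castSucc_lt_last q)
          · rcases mem_image.mp hy with ⟨z, hz, rfl⟩
            exact Fin.castSucc_le_castSucc_iff.mpr (min'_le _ _ hz)
      rw [parkStep_eq, dif_pos hne', hmin, hstep]
      simp [Phi, image_insert, insert_union]
    · -- d ≥ 1
      have hfr := fr_phi_of_pos (S := S) hd c
      have hne' : (fr (Phi (S, d)).1 (Fin.castSucc c)).Nonempty := by
        rw [hfr]; exact hne.image _
      have hmin : (fr (Phi (S, d)).1 (Fin.castSucc c)).min' hne' = Fin.castSucc q := by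
        apply le_antisymm
        · exact min'_le _ _ (by rw [hfr]; exact mem_image_of_mem _ (min'_mem _ hne))
        · apply le_min'
          intro y hy
          rw [hfr] at hy
          rcases mem_image.mp hy with ⟨z, hz, rfl⟩
          exact Fin.castSucc_le_castSucc_iff.mpr (min'_le _ _ hz)
      rw [parkStep_eq, dif_pos hne', hmin, hstep]
      simp [Phi, image_insert, insert_union]
  · -- failure in small world
    have hstep : parkStep (S, d) c = (S, d + 1) := by rw [parkStep_eq, dif_neg hne]
    have hempty : fr S c = ∅ := not_nonempty_iff_eq_empty.mp hne
    rcases Nat.eq_zero_or_pos d with rfl | hd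
    · have hfr := fr_phi_of_zero (S := S) c
      have hne' : (fr (Phi (S, 0)).1 (Fin.castSucc c)).Nonempty := by
        rw [hfr]; exact insert_nonempty _ _
      have hfr2 : fr (Phi (S, 0)).1 (Fin.castSucc c) = {Fin.last m} := by
        rw [hfr, hempty]; simp
      have hmin : (fr (Phi (S, 0)).1 (Fin.castSucc c)).min' hne' = Fin.last m := by
        apply le_antisymm
        · exact min'_le _ _ (by rw [hfr]; exact mem_insert_self _ _)
        · refine le_min' _ _ _ fun y hy => ?_
          rw [hfr2, mem_singleton] at hy; subst hy; exact le_refl _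
      rw [parkStep_eq, dif_pos hne', hmin, hstep]
      simp [Phi]
    · have hfr := fr_phi_of_pos (S := S) hd c
      have hne' : ¬ (fr (Phi (S, d)).1 (Fin.castSucc c)).Nonempty := by
        rw [hfr, hempty]; simp
      rw [parkStep_eq, dif_neg hne', hstep]
      simp only [Phi]
      rw [if_pos (by omega : 1 ≤ d), if_pos (by omega : 1 ≤ d + 1)]
      refine Prod.ext rfl ?_
      simp; omega

lemma foldl_phi (l : List (Fin m)) : ∀ p : Finset (Fin m) × ℕ,
    (l.map Fin.castSucc).foldl parkStep (Phi p) = Phi (l.foldl parkStep p) := by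
  induction l with
  | nil => intro p; rfl
  | cons c l ih => intro p; simp only [List.map_cons, List.foldl_cons, phi_step p c]; exact ih _

lemma parkRun_castSucc {N : ℕ} (f : Fin N → Fin m) :
    parkRun (fun j => Fin.castSucc (f j)) = Phi (parkRun f) := by
  unfold parkRun
  have h := foldl_phi (List.ofFn f) ((∅, 0) : Finset (Fin m) × ℕ)
  have h0 : Phi (m := m) (∅, 0) = (∅, 0) := by simp [Phi]
  rw [h0] at h
  rw [show (List.ofFn fun j => Fin.castSucc (f j)) = (List.ofFn f).map Fin.castSucc by
    rw [List.map_ofFn]; rfl]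
  exact h

lemma defect_castSucc {N : ℕ} (f : Fin N → Fin m) :
    defect (fun j => Fin.castSucc (f j)) = defect f - 1 := by
  unfold defect; rw [parkRun_castSucc]; rfl

lemma last_mem_parkRun_castSucc_iff {N : ℕ} (f : Fin N → Fin m) :
    Fin.last m ∈ (parkRun (fun j => Fin.castSucc (f j))).1 ↔ 1 ≤ defect f := by
  rw [parkRun_castSucc]
  rw [mem_phi_fst]
  constructor
  · rintro (⟨y, -, hy⟩ | ⟨h, -⟩)
    · exact absurd hy (Fin.ne_of_lt (Fin.castSucc_lt_last y))
    · exact h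
  · intro h; exact Or.inr ⟨h, rfl⟩


open Classical in
/-- circular parking step on `Fin (m+1)` -/
noncomputable def cstep (S : Finset (Fin (m+1))) (c : Fin (m+1)) : Finset (Fin (m+1)) :=
  if h : ∃ k : ℕ, c + (k : Fin (m+1)) ∉ S then
    insert (c + ((Nat.find h : ℕ) : Fin (m+1))) S else S

lemma subset_cstep (S : Finset (Fin (m+1))) (c : Fin (m+1)) : S ⊆ cstep S c := by
  unfold cstep; split_ifs <;> simp [Finset.subset_insert]

lemma cstep_exists {S : Finset (Fin (m+1))} (h : S ≠ Finset.univ) (c : Fin (m+1)) :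
    ∃ k : ℕ, c + (k : Fin (m+1)) ∉ S := by
  obtain ⟨x, hx⟩ : ∃ x, x ∉ S := by
    by_contra hc; push_neg at hc; exact h (Finset.eq_univ_iff_forall.mpr hc)
  exact ⟨(x - c).val, by rwa [Fin.cast_val_eq_self, add_sub_cancel]⟩

lemma card_cstep {S : Finset (Fin (m+1))} (h : S ≠ Finset.univ) (c : Fin (m+1)) :
    (cstep S c).card = S.card + 1 := by
  unfold cstep
  rw [dif_pos (cstep_exists h c)]
  exact Finset.card_insert_of_notMem (Nat.find_spec (cstep_exists h c))

lemma self_mem_cstep (S : Finset (Fin (m+1))) (c : Fin (m+1)) : c ∈ cstep S c := by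
  by_cases hc : c ∈ S
  · exact subset_cstep S c hc
  · have h : ∃ k : ℕ, c + (k : Fin (m+1)) ∉ S := ⟨0, by simpa using hc⟩
    unfold cstep
    rw [dif_pos h]
    have : Nat.find h = 0 := (Nat.find_eq_zero h).mpr (by simpa using hc)
    rw [this]
    simp

lemma cstep_image_add (S : Finset (Fin (m+1))) (c t : Fin (m+1)) :
    cstep (S.image (· + t)) (c + t) = (cstep S c).image (· + t) := by
  have hinj : Function.Injective (· + t : Fin (m+1) → Fin (m+1)) := add_left_injective t
  have key : ∀ k : ℕ, (c + t + (k : Fin (m+1)) ∉ S.image (· + t)) ↔ (c + (k : Fin (m+1)) ∉ S) := by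
    intro k
    rw [show c + t + (k : Fin (m+1)) = (c + (k : Fin (m+1))) + t by ring]
    simp [Finset.mem_image, add_left_inj]
  by_cases h : ∃ k : ℕ, c + (k : Fin (m+1)) ∉ S
  · have h' : ∃ k : ℕ, c + t + (k : Fin (m+1)) ∉ S.image (· + t) := by
      obtain ⟨k, hk⟩ := h; exact ⟨k, (key k).mpr hk⟩
    have hfind : Nat.find h' = Nat.find h := by
      apply le_antisymm
      · exact Nat.find_min' h' ((key _).mpr (Nat.find_spec h))
      · exact Nat.find_min' h ((key _).mp (Nat.find_spec h'))
    unfold cstep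
    rw [dif_pos h', dif_pos h, hfind, Finset.image_insert]
    congr 1
    ring
  · have h' : ¬ ∃ k : ℕ, c + t + (k : Fin (m+1)) ∉ S.image (· + t) := by
      rintro ⟨k, hk⟩; exact h ⟨k, (key k).mp hk⟩
    unfold cstep
    rw [dif_neg h', dif_neg h]

noncomputable def crun {N : ℕ} (g : Fin N → Fin (m+1)) : Finset (Fin (m+1)) :=
  (List.ofFn g).foldl cstep ∅

lemma foldl_cstep_image_add (l : List (Fin (m+1))) : ∀ (S : Finset (Fin (m+1))) (t : Fin (m+1)),
    (l.map (· + t)).foldl cstep (S.image (· + t)) = (l.foldl cstep S).image (· + t) := by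
  induction l with
  | nil => intro S t; rfl
  | cons c l ih =>
    intro S t
    simp only [List.map_cons, List.foldl_cons]
    rw [cstep_image_add]
    exact ih _ t

lemma crun_add {N : ℕ} (g : Fin N → Fin (m+1)) (t : Fin (m+1)) :
    crun (fun j => g j + t) = (crun g).image (· + t) := by
  unfold crun
  have h := foldl_cstep_image_add (List.ofFn g) ∅ t
  rw [Finset.image_empty] at h
  rw [show (List.ofFn fun j => g j + t) = (List.ofFn g).map (· + t) by rw [List.map_ofFn]; rfl]
  exact h

lemma foldl_cstep_card (l : List (Fin (m+1))) : ∀ S : Finset (Fin (m+1)),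
    S.card + l.length ≤ m + 1 → (l.foldl cstep S).card = S.card + l.length := by
  induction l with
  | nil => intro S _; simp
  | cons c l ih =>
    intro S hle
    simp only [List.foldl_cons, List.length_cons] at *
    have hS : S ≠ Finset.univ := by
      intro h
      rw [h, Finset.card_univ, Fintype.card_fin] at hle
      omega
    rw [ih _ (by rw [card_cstep hS]; omega), card_cstep hS]
    omega

lemma crun_card {N : ℕ} (g : Fin N → Fin (m+1)) (h : N ≤ m + 1) : (crun g).card = N := by
  unfold crun
  rw [foldl_cstep_card _ _ (by simpa using h)]
  simp

lemma mem_foldl_cstep_of_mem (l : List (Fin (m+1))) : ∀ (S : Finset (Fin (m+1))) (x : Fin (m+1)),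
    x ∈ S → x ∈ l.foldl cstep S := by
  induction l with
  | nil => intro S x hx; exact hx
  | cons c l ih => intro S x hx; exact ih _ x (subset_cstep S c hx)

lemma mem_foldl_cstep_of_mem_list (l : List (Fin (m+1))) : ∀ (S : Finset (Fin (m+1))) (c : Fin (m+1)),
    c ∈ l → c ∈ l.foldl cstep S := by
  induction l with
  | nil => intro S c hc; simp at hc
  | cons a l ih =>
    intro S c hc
    rcases List.mem_cons.mp hc with rfl | hc
    · exact mem_foldl_cstep_of_mem l _ c (self_mem_cstep S c)
    · exact ih _ c hc

/-- key step correspondence : parking on the free spot, circularly -/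
lemma cstep_of_fr_nonempty {S : Finset (Fin (m+1))} {c : Fin (m+1)} (h : (fr S c).Nonempty) :
    cstep S c = insert ((fr S c).min' h) S := by
  set q := (fr S c).min' h with hq
  have hq_mem : q ∈ fr S c := Finset.min'_mem _ _
  rcases mem_fr.mp hq_mem with ⟨hqS, hcq⟩
  have hcq' : c.val ≤ q.val := hcq
  set k0 := q.val - c.val with hk0
  have hval : ∀ k : ℕ, c.val + k ≤ m → (c + (k : Fin (m+1))).val = c.val + k := by
    intro k hk
    rw [Fin.val_add, Fin.val_natCast]
    have h1 : k % (m+1) = k := Nat.mod_eq_of_lt (by omega)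
    rw [h1]
    exact Nat.mod_eq_of_lt (by omega)
  have hp0 : c + (k0 : Fin (m+1)) = q := by
    apply Fin.ext
    rw [hval k0 (by omega)]
    omega
  have hex : ∃ k : ℕ, c + (k : Fin (m+1)) ∉ S := ⟨k0, by rwa [hp0]⟩
  have hmin : ∀ k < k0, ¬ (c + (k : Fin (m+1)) ∉ S) := by
    intro k hk hknot
    have hvk : (c + (k : Fin (m+1))).val = c.val + k := hval k (by omega)
    have hmem : c + (k : Fin (m+1)) ∈ fr S c := mem_fr.mpr ⟨hknot, by
      show c.val ≤ (c + (k : Fin (m+1))).val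
      omega⟩
    have := Finset.min'_le _ _ hmem
    rw [← hq] at this
    have : q.val ≤ (c + (k : Fin (m+1))).val := this
    omega
  have hfind : Nat.find hex = k0 := (Nat.find_eq_iff hex).mpr ⟨by rwa [hp0], hmin⟩
  unfold cstep
  rw [dif_pos hex, hfind, hp0]

lemma last_mem_of_fr_empty {S : Finset (Fin (m+1))} {c : Fin (m+1)} (h : ¬ (fr S c).Nonempty) :
    Fin.last m ∈ S := by
  by_contra hlast
  exact h ⟨Fin.last m, mem_fr.mpr ⟨hlast, Fin.le_last c⟩⟩

lemma lin_circ (l : List (Fin (m+1))) : ∀ (S T : Finset (Fin (m+1))) (d : ℕ),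
    ((T = S ∧ d = 0) ∨ (Fin.last m ∈ T ∧ 1 ≤ d)) →
    ((l.foldl cstep T = (l.foldl parkStep (S, d)).1 ∧ (l.foldl parkStep (S, d)).2 = 0) ∨
      (Fin.last m ∈ l.foldl cstep T ∧ 1 ≤ (l.foldl parkStep (S, d)).2)) := by
  induction l with
  | nil => intro S T d h; simpa using h
  | cons c l ih =>
    intro S T d h
    simp only [List.foldl_cons]
    rcases h with ⟨heq, rfl⟩ | ⟨hT, hd⟩
    · subst heq
      by_cases hne : (fr T c).Nonempty
      · have h1 : parkStep (T, 0) c = (insert ((fr T c).min' hne) T, 0) := by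
          rw [parkStep_eq, dif_pos hne]
        rw [h1, cstep_of_fr_nonempty hne]
        exact ih _ _ _ (Or.inl ⟨rfl, rfl⟩)
      · have h1 : parkStep (T, 0) c = (T, 1) := by rw [parkStep_eq, dif_neg hne]
        rw [h1]
        exact ih _ _ _ (Or.inr ⟨subset_cstep T c (last_mem_of_fr_empty hne), le_refl 1⟩)
    · rcases hp : parkStep (S, d) c with ⟨S', d'⟩
      have hd' : 1 ≤ d' := by
        have := parkStep_snd_le (S, d) c
        rw [hp] at this
        exact le_trans hd this
      exact ih _ _ _ (Or.inr ⟨subset_cstep T c hT, hd'⟩)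

lemma last_notMem_crun_iff {N : ℕ} (g : Fin N → Fin (m+1)) :
    Fin.last m ∉ crun g ↔ (defect g = 0 ∧ Fin.last m ∉ (parkRun g).1) := by
  have h := lin_circ (List.ofFn g) ∅ ∅ 0 (Or.inl ⟨rfl, rfl⟩)
  unfold crun defect parkRun at *
  rcases h with ⟨heq, hz⟩ | ⟨hmem, hd⟩
  · constructor
    · intro hnot; exact ⟨hz, heq ▸ hnot⟩
    · intro ⟨_, hnot⟩; exact heq ▸ hnot
  · constructor
    · intro hnot; exact absurd hmem hnot
    · intro ⟨hz, _⟩; omega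

lemma last_mem_crun_of_value {N : ℕ} (g : Fin N → Fin (m+1)) (j : Fin N)
    (hj : g j = Fin.last m) : Fin.last m ∈ crun g := by
  unfold crun
  exact mem_foldl_cstep_of_mem_list _ _ _ (by rw [List.mem_ofFn]; exact ⟨j, hj⟩)


open Classical in
/-- set of circular assignments leaving the top spot empty -/
noncomputable def circSet (N m : ℕ) : Finset (Fin N → Fin (m+1)) :=
  Finset.univ.filter (fun g => Fin.last m ∉ crun g)

open Classical in
lemma card_notMem_crun_rot (N : ℕ) (s t : Fin (m+1)) :
    (Finset.univ.filter (fun g : Fin N → Fin (m+1) => s ∉ crun g)).card =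
    (Finset.univ.filter (fun g : Fin N → Fin (m+1) => s + t ∉ crun g)).card := by
  apply Finset.card_bij' (fun g _ => fun j => g j + t) (fun g _ => fun j => g j - t)
  · intro g hg
    simp only [Finset.mem_filter, Finset.mem_univ, true_and] at *
    rw [crun_add g t, Finset.mem_image]
    push_neg
    intro x hx
    intro hc
    exact hg (by rwa [show x = s from add_right_cancel hc] at hx)
  · intro g hg
    simp only [Finset.mem_filter, Finset.mem_univ, true_and] at *
    rw [show (fun j => g j - t) = (fun j => g j + (-t)) from by funext j; ring]
    rw [crun_add g (-t), Finset.mem_image]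
    push_neg
    intro x hx hc
    exact hg (by rwa [show x = s + t from by rw [← hc]; ring] at hx)
  · intro g _; funext j; ring
  · intro g _; funext j; ring

open Classical in
lemma card_notMem_crun_eq (N : ℕ) (s : Fin (m+1)) :
    (Finset.univ.filter (fun g : Fin N → Fin (m+1) => s ∉ crun g)).card = (circSet N m).card := by
  have h := card_notMem_crun_rot N s (Fin.last m - s)
  rw [show s + (Fin.last m - s) = Fin.last m from by ring] at h
  rw [h]
  unfold circSet
  congr 1

open Classical in
lemma sum_card_notMem_crun (N : ℕ) (hN : N ≤ m + 1) :
    ∑ s : Fin (m+1), (Finset.univ.filter (fun g : Fin N → Fin (m+1) => s ∉ crun g)).card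
      = (m + 1 - N) * (m+1)^N := by
  have hswap : ∀ s : Fin (m+1), (Finset.univ.filter (fun g : Fin N → Fin (m+1) => s ∉ crun g)).card
      = ∑ g : Fin N → Fin (m+1), if s ∉ crun g then 1 else 0 := by
    intro s; rw [Finset.card_filter]
  simp_rw [hswap]
  rw [Finset.sum_comm]
  have hinner : ∀ g : Fin N → Fin (m+1),
      (∑ s : Fin (m+1), if s ∉ crun g then 1 else 0) = m + 1 - N := by
    intro g
    rw [← Finset.card_filter]
    have : Finset.univ.filter (fun s => s ∉ crun g) = (crun g)ᶜ := by
      ext x; simp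
    rw [this, Finset.card_compl, crun_card g hN]
    simp
  simp_rw [hinner]
  rw [Finset.sum_const]
  simp [Fintype.card_fun, mul_comm]

open Classical in
lemma circSet_card (N : ℕ) (hN : N ≤ m + 1) :
    (m + 1) * (circSet N m).card = (m + 1 - N) * (m+1)^N := by
  have h := sum_card_notMem_crun (m := m) N hN
  calc (m+1) * (circSet N m).card
      = ∑ _s : Fin (m+1), (circSet N m).card := by rw [Finset.sum_const]; simp [mul_comm]
    _ = ∑ s : Fin (m+1), (Finset.univ.filter (fun g : Fin N → Fin (m+1) => s ∉ crun g)).card := by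
        exact Finset.sum_congr rfl fun s _ => (card_notMem_crun_eq N s).symm
    _ = (m + 1 - N) * (m+1)^N := h

lemma last_notMem_crun_castSucc_iff {N : ℕ} (f : Fin N → Fin m) :
    Fin.last m ∉ crun (fun j => Fin.castSucc (f j)) ↔ defect f = 0 := by
  rw [last_notMem_crun_iff]
  rw [show defect (fun j => Fin.castSucc (f j)) = defect f - 1 from defect_castSucc f]
  rw [show (parkRun (fun j => Fin.castSucc (f j))).1 = (Phi (parkRun f)).1 from by rw [parkRun_castSucc]]
  constructor
  · rintro ⟨h1, h2⟩
    by_contra hne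
    have : 1 ≤ defect f := by omega
    exact h2 (mem_phi_fst.mpr (Or.inr ⟨this, rfl⟩))
  · intro h
    refine ⟨by omega, ?_⟩
    rw [mem_phi_fst]
    unfold defect at h
    rintro (⟨y, -, hy⟩ | ⟨h1, -⟩)
    · exact absurd hy (Fin.ne_of_lt (Fin.castSucc_lt_last y))
    · omega

open Classical in
lemma linear_card_eq_circ (N : ℕ) :
    (Finset.univ.filter (fun f : Fin N → Fin m => defect f = 0)).card = (circSet N m).card := by
  apply Finset.card_bij (fun f _ => fun j => Fin.castSucc (f j))
  · intro f hf
    simp only [Finset.mem_filter, Finset.mem_univ, true_and] at *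
    unfold circSet
    simp only [Finset.mem_filter, Finset.mem_univ, true_and]
    exact (last_notMem_crun_castSucc_iff f).mpr hf
  · intro f hf f' hf' h
    funext j
    have := congrFun h j
    exact Fin.castSucc_injective m this
  · intro g hg
    unfold circSet at hg
    simp only [Finset.mem_filter, Finset.mem_univ, true_and] at hg
    have hval : ∀ j, g j ≠ Fin.last m := fun j hj => hg (last_mem_crun_of_value g j hj)
    have hlt : ∀ j, (g j).val < m := by
      intro j
      have := Fin.lt_last_iff_ne_last.mpr (hval j)
      exact this
    refine ⟨fun j => (g j).castLT (hlt j), ?_, ?_⟩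
    · simp only [Finset.mem_filter, Finset.mem_univ, true_and]
      rw [← last_notMem_crun_castSucc_iff]
      exact hg
    · funext j
      apply Fin.ext
      simp

/-- Pollak's count: `(m+1) * #{parking assignments of N cars on m spots} = (m+1-N)*(m+1)^N`. -/
lemma P_count (N : ℕ) (hN : N ≤ m) :
    (m + 1) * (Finset.univ.filter (fun f : Fin N → Fin m => defect f = 0)).card
      = (m + 1 - N) * (m+1)^N := by
  rw [linear_card_eq_circ]
  exact circSet_card N (by omega)

section Perm

lemma ofFn_comp_perm {k : ℕ} {α : Type*} [DecidableEq α] (F : Fin k → α) (σ : Equiv.Perm (Fin k)) :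
    (List.ofFn (F ∘ σ)).Perm (List.ofFn F) := by
  rw [List.ofFn_eq_map, List.ofFn_eq_map]
  have h1 : ((List.finRange k).map σ).Perm (List.finRange k) := by
    apply List.perm_of_nodup_nodup_toFinset_eq
    · exact (List.nodup_finRange k).map σ.injective
    · exact List.nodup_finRange k
    · ext x
      constructor
      · intro _
        rw [List.mem_toFinset]
        exact List.mem_finRange x
      · intro _
        rw [List.mem_toFinset, List.mem_map]
        exact ⟨σ.symm x, List.mem_finRange _, by simp⟩
  have h2 := h1.map F
  rw [List.map_map] at h2
  exact h2

/-- the permutation sending `j` to `last` used to move one car to the end -/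
def moveEnd {K : ℕ} (j : Fin (K+1)) : Equiv.Perm (Fin (K+1)) :=
  (finSuccEquiv' j).trans (finSuccEquiv' (Fin.last K)).symm

lemma snoc_comp_moveEnd {K : ℕ} {α : Type*} (j : Fin (K+1)) (c : α) (h : Fin K → α) :
    (Fin.snoc h c : Fin (K+1) → α) ∘ (moveEnd j) = j.insertNth c h := by
  funext x
  by_cases hx : x = j
  · subst hx
    simp only [Function.comp_apply, moveEnd, Equiv.trans_apply, finSuccEquiv'_at,
      finSuccEquiv'_symm_none, Fin.insertNth_apply_same, Fin.snoc_last]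
  · obtain ⟨i, rfl⟩ := Fin.exists_succAbove_eq (Ne.intro hx)
    simp only [Function.comp_apply, moveEnd, Equiv.trans_apply, finSuccEquiv'_succAbove,
      finSuccEquiv'_symm_some, Fin.succAbove_last, Fin.insertNth_apply_succAbove,
      Fin.snoc_castSucc]

lemma ofFn_snoc {K : ℕ} {α : Type*} (c : α) (h : Fin K → α) :
    List.ofFn (Fin.snoc h c : Fin (K+1) → α) = List.ofFn h ++ [c] := by
  rw [List.ofFn_succ']
  simp only [Fin.snoc_castSucc, Fin.snoc_last, List.concat_eq_append]

lemma parkRun_insertNth {K n' : ℕ} (j : Fin (K+1)) (c : Fin n') (h : Fin K → Fin n') :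
    parkRun (j.insertNth c h) = parkStep (parkRun h) c := by
  unfold parkRun
  have hperm : (List.ofFn (j.insertNth c h)).Perm (List.ofFn h ++ [c]) := by
    rw [← snoc_comp_moveEnd j c h, ← ofFn_snoc]
    exact ofFn_comp_perm _ (moveEnd j)
  rw [hperm.foldl_eq, List.foldl_append]
  rfl

lemma insertNth_self {K : ℕ} {α : Type*} (j : Fin (K+1)) (f : Fin (K+1) → α) :
    j.insertNth (f j) (fun i => f (j.succAbove i)) = f := by
  funext x
  by_cases hx : x = j
  · subst hx; exact Fin.insertNth_apply_same _ _ _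
  · obtain ⟨i, rfl⟩ := Fin.exists_succAbove_eq (Ne.intro hx)
    exact Fin.insertNth_apply_succAbove _ _ _ _

end Perm

section Deletion

lemma fr_last_eq_empty {S : Finset (Fin (m+1))} (h : Fin.last m ∈ S) :
    fr S (Fin.last m) = ∅ := by
  rw [Finset.eq_empty_iff_forall_notMem]
  intro x hx
  rcases mem_fr.mp hx with ⟨hxS, hlx⟩
  have : x = Fin.last m := le_antisymm (Fin.le_last x) hlx
  exact hxS (this ▸ h)

lemma fr_last_nonempty {S : Finset (Fin (m+1))} (h : Fin.last m ∉ S) :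
    (fr S (Fin.last m)).Nonempty := ⟨Fin.last m, mem_fr.mpr ⟨h, le_refl _⟩⟩

lemma parkStep_fst_subset (p : Finset (Fin m) × ℕ) (c : Fin m) : p.1 ⊆ (parkStep p c).1 := by
  rw [parkStep_eq]; split_ifs <;> simp [Finset.subset_insert]

lemma mem_foldl_parkStep_of_mem (l : List (Fin m)) : ∀ (p : Finset (Fin m) × ℕ) (x : Fin m),
    x ∈ p.1 → x ∈ (l.foldl parkStep p).1 := by
  induction l with
  | nil => intro p x hx; exact hx
  | cons c l ih => intro p x hx; exact ih _ x (parkStep_fst_subset p c hx)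

lemma last_mem_foldl_parkStep (l : List (Fin (m+1))) : ∀ (p : Finset (Fin (m+1)) × ℕ),
    Fin.last m ∈ l → Fin.last m ∈ (l.foldl parkStep p).1 := by
  induction l with
  | nil => intro p h; simp at h
  | cons a l ih =>
    intro p ha
    rcases List.mem_cons.mp ha with rfl | ha
    · rw [List.foldl_cons]
      apply mem_foldl_parkStep_of_mem
      by_cases hmem : Fin.last m ∈ p.1
      · exact parkStep_fst_subset p _ hmem
      · rw [parkStep_eq, dif_pos (fr_last_nonempty hmem)]
        have hmin : (fr p.1 (Fin.last m)).min' (fr_last_nonempty hmem) = Fin.last m := by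
          apply le_antisymm
          · exact Finset.min'_le _ _ (mem_fr.mpr ⟨hmem, le_refl _⟩)
          · exact (mem_fr.mp (Finset.min'_mem _ (fr_last_nonempty hmem))).2
        rw [hmin]
        exact Finset.mem_insert_self _ _
    · exact ih _ ha


/-- a second driver aiming at the top spot always fails -/
lemma defect_pos_of_last_mem {K : ℕ} (f : Fin (K+1) → Fin (m+1)) (j : Fin (K+1))
    (hj : f j = Fin.last m) (j' : Fin (K+1)) (hj' : j' ≠ j) (hlast : f j' = Fin.last m) :
    1 ≤ defect f := by
  have hrun : parkRun f = parkStep (parkRun (fun i => f (j.succAbove i))) (f j) := by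
    conv_lhs => rw [← insertNth_self j f]
    exact parkRun_insertNth j (f j) _
  obtain ⟨i, hi⟩ := Fin.exists_succAbove_eq hj'
  have hlist : Fin.last m ∈ List.ofFn (fun i => f (j.succAbove i)) := by
    rw [List.mem_ofFn]
    exact ⟨i, by show f (j.succAbove i) = Fin.last m; rw [hi]; exact hlast⟩
  -- the top spot is occupied after running the other cars
  have hmem : Fin.last m ∈ (parkRun (fun i => f (j.succAbove i))).1 := by
    unfold parkRun
    exact last_mem_foldl_parkStep _ _ hlist
  unfold defect
  rw [hrun, hj, parkStep_eq,
    dif_neg (by rw [fr_last_eq_empty hmem]; exact Finset.not_nonempty_empty)]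
  simp

lemma defect_insert_last {K : ℕ} (j : Fin (K+1)) (g : Fin K → Fin m) :
    defect (j.insertNth (Fin.last m) (fun i => Fin.castSucc (g i))) = 0 ↔ defect g = 0 := by
  unfold defect
  rw [parkRun_insertNth, parkRun_castSucc]
  rcases hrun : parkRun g with ⟨S, d⟩
  rcases Nat.eq_zero_or_pos d with rfl | hd
  · have hnot : Fin.last m ∉ (Phi (S, 0)).1 := by
      rw [mem_phi_fst]
      rintro (⟨y, -, hy⟩ | ⟨h1, -⟩)
      · exact absurd hy (Fin.ne_of_lt (Fin.castSucc_lt_last y))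
      · omega
    rw [parkStep_eq, dif_pos (fr_last_nonempty hnot)]
    simp [Phi]
  · have hmem : Fin.last m ∈ (Phi (S, d)).1 :=
      mem_phi_fst.mpr (Or.inr ⟨hd, rfl⟩)
    rw [parkStep_eq, dif_neg (by rw [fr_last_eq_empty hmem]; exact Finset.not_nonempty_empty)]
    simp only [Phi]
    omega

end Deletion

section Count1

lemma card_Aj {K : ℕ} (j : Fin (K+1)) :
    (Finset.univ.filter (fun f : Fin (K+1) → Fin (m+1) => defect f = 0 ∧ f j = Fin.last m)).card
      = (Finset.univ.filter (fun g : Fin K → Fin m => defect g = 0)).card := by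
  apply (Finset.card_bij (fun g _ => j.insertNth (Fin.last m) (fun i => Fin.castSucc (g i))) ?_ ?_ ?_).symm
  · intro g hg
    rw [Finset.mem_filter] at hg
    simp only [Finset.mem_filter, Finset.mem_univ, true_and]
    exact ⟨(defect_insert_last j g).mpr hg.2, Fin.insertNth_apply_same _ _ _⟩
  · intro g hg g' hg' h
    funext i
    have h2 := congrFun h (j.succAbove i)
    rw [Fin.insertNth_apply_succAbove, Fin.insertNth_apply_succAbove] at h2
    exact Fin.castSucc_injective m h2
  · intro f hf
    simp only [Finset.mem_filter, Finset.mem_univ, true_and] at hf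
    obtain ⟨hdef, hfj⟩ := hf
    have hne : ∀ i : Fin K, f (j.succAbove i) ≠ Fin.last m := by
      intro i hi
      have := defect_pos_of_last_mem f j hfj (j.succAbove i) (Fin.succAbove_ne j i) hi
      omega
    have hlt : ∀ i : Fin K, (f (j.succAbove i)).val < m := by
      intro i
      have h2 : f (j.succAbove i) < Fin.last m := Fin.lt_last_iff_ne_last.mpr (hne i)
      simpa [Fin.lt_def] using h2
    have hfeq : j.insertNth (Fin.last m)
        (fun i => Fin.castSucc ((f (j.succAbove i)).castLT (hlt i))) = f := by
      have h3 : (fun i => Fin.castSucc ((f (j.succAbove i)).castLT (hlt i)))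
          = fun i => f (j.succAbove i) := by
        funext i; apply Fin.ext; simp
      rw [h3, ← hfj, insertNth_self]
    refine ⟨fun i => (f (j.succAbove i)).castLT (hlt i), ?_, hfeq⟩
    simp only [Finset.mem_filter, Finset.mem_univ, true_and]
    apply (defect_insert_last j _).mp
    show defect (j.insertNth (Fin.last m)
        (fun i => Fin.castSucc ((f (j.succAbove i)).castLT (hlt i)))) = 0
    rw [hfeq]
    exact hdef

lemma card_exists_last {K : ℕ} :
    (Finset.univ.filter
        (fun f : Fin (K+1) → Fin (m+1) => defect f = 0 ∧ ∃ j, f j = Fin.last m)).card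
      = (K+1) * (Finset.univ.filter (fun g : Fin K → Fin m => defect g = 0)).card := by
  have hsplit : Finset.univ.filter
        (fun f : Fin (K+1) → Fin (m+1) => defect f = 0 ∧ ∃ j, f j = Fin.last m)
      = Finset.univ.biUnion (fun j : Fin (K+1) =>
          Finset.univ.filter (fun f : Fin (K+1) → Fin (m+1) => defect f = 0 ∧ f j = Fin.last m)) := by
    ext f
    simp only [Finset.mem_filter, Finset.mem_univ, true_and, Finset.mem_biUnion]
    constructor
    · rintro ⟨hd, j, hj⟩; exact ⟨j, hd, hj⟩
    · rintro ⟨j, hd, hj⟩; exact ⟨hd, j, hj⟩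
  rw [hsplit, Finset.card_biUnion]
  · rw [Finset.sum_congr rfl (fun j _ => card_Aj j)]
    rw [Finset.sum_const, Finset.card_univ, Fintype.card_fin, smul_eq_mul]
  · intro j _ j' _ hjj'
    rw [Function.onFun, Finset.disjoint_left]
    intro f hf hf'
    simp only [Finset.mem_filter, Finset.mem_univ, true_and] at hf hf'
    have := defect_pos_of_last_mem f j hf.2 j' (Ne.symm hjj') hf'.2
    omega

lemma card_no_last {K : ℕ} :
    (Finset.univ.filter
        (fun f : Fin (K+1) → Fin (m+1) => defect f = 0 ∧ ¬ ∃ j, f j = Fin.last m)).card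
      = (Finset.univ.filter (fun f0 : Fin (K+1) → Fin m => defect f0 ≤ 1)).card := by
  apply (Finset.card_bij (fun f0 _ => fun i => Fin.castSucc (f0 i)) ?_ ?_ ?_).symm
  · intro f0 h
    rw [Finset.mem_filter] at h
    simp only [Finset.mem_filter, Finset.mem_univ, true_and]
    have h1 := h.2
    constructor
    · rw [defect_castSucc]; omega
    · rintro ⟨j, hj⟩
      exact absurd hj (Fin.ne_of_lt (Fin.castSucc_lt_last _))
  · intro f0 h0 f0' h0' h
    funext i
    exact Fin.castSucc_injective m (congrFun h i)
  · intro f hf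
    simp only [Finset.mem_filter, Finset.mem_univ, true_and] at hf
    obtain ⟨hd, hnl⟩ := hf
    push_neg at hnl
    have hlt : ∀ i, (f i).val < m := by
      intro i
      have h2 : f i < Fin.last m := Fin.lt_last_iff_ne_last.mpr (hnl i)
      simpa [Fin.lt_def] using h2
    have hfeq : (fun i => Fin.castSucc ((f i).castLT (hlt i))) = f := by
      funext i; apply Fin.ext; simp
    refine ⟨fun i => (f i).castLT (hlt i), ?_, hfeq⟩
    simp only [Finset.mem_filter, Finset.mem_univ, true_and]
    have h3 : defect (fun i => Fin.castSucc ((f i).castLT (hlt i))) = 0 := by rw [hfeq]; exact hd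
    rw [defect_castSucc] at h3
    omega

/-- main decomposition: parking functions with an extra spot split according to
whether some driver picks the extra spot -/
lemma key_identity (K : ℕ) :
    (Finset.univ.filter (fun f : Fin (K+1) → Fin (m+1) => defect f = 0)).card
      = (Finset.univ.filter (fun f0 : Fin (K+1) → Fin m => defect f0 ≤ 1)).card
        + (K+1) * (Finset.univ.filter (fun g : Fin K → Fin m => defect g = 0)).card := by
  have h := Finset.card_filter_add_card_filter_not
    (s := Finset.univ.filter (fun f : Fin (K+1) → Fin (m+1) => defect f = 0))
    (p := fun f => ∃ j, f j = Fin.last m)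
  rw [Finset.filter_filter, Finset.filter_filter] at h
  rw [← h, card_exists_last, card_no_last]
  ring

end Count1

section Formulas

def cp' (n m k : ℕ) : ℕ :=
  (Finset.univ.filter (fun f : Fin m → Fin n => defect f = k)).card

lemma D_eq (n : ℕ) :
    (Finset.univ.filter (fun f : Fin n → Fin n => defect f ≤ 1)).card = cp' n n 0 + cp' n n 1 := by
  unfold cp'
  rw [← Finset.card_union_of_disjoint (by
    rw [Finset.disjoint_left]
    intro f h0 h1
    rw [Finset.mem_filter] at h0 h1
    omega)]
  congr 1
  ext f
  simp only [Finset.mem_filter, Finset.mem_univ, true_and, Finset.mem_union]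
  omega

lemma cp_zero (K : ℕ) : cp' (K+2) (K+2) 0 = (K+3)^(K+1) := by
  have h := P_count (m := K+2) (K+2) (le_refl _)
  apply Nat.eq_of_mul_eq_mul_left (show 0 < K+3 by omega)
  have h2 : K+2+1 = K+3 := by omega
  rw [h2] at h
  have h3 : K + 3 - (K + 2) = 1 := by omega
  rw [h3, one_mul] at h
  unfold cp'
  rw [h, pow_succ]
  ring

lemma E2_eq (K : ℕ) :
    (Finset.univ.filter (fun g : Fin (K+1) → Fin (K+2) => defect g = 0)).card = 2*(K+3)^K := by
  have h := P_count (m := K+2) (K+1) (by omega)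
  apply Nat.eq_of_mul_eq_mul_left (show 0 < K+3 by omega)
  have h2 : K+2+1 = K+3 := by omega
  rw [h2] at h
  have h3 : K + 3 - (K + 1) = 2 := by omega
  rw [h3] at h
  rw [h, pow_succ]
  ring

lemma E3_eq (K : ℕ) :
    (Finset.univ.filter (fun f : Fin (K+2) → Fin (K+3) => defect f = 0)).card = 2*(K+4)^(K+1) := by
  have h := P_count (m := K+3) (K+2) (by omega)
  apply Nat.eq_of_mul_eq_mul_left (show 0 < K+4 by omega)
  have h2 : K+3+1 = K+4 := by omega
  rw [h2] at h
  have h3 : K + 4 - (K + 2) = 2 := by omega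
  rw [h3] at h
  rw [h, pow_succ]
  ring

lemma cp_sum (K : ℕ) :
    cp' (K+2) (K+2) 0 + cp' (K+2) (K+2) 1 + (K+2) * (2*(K+3)^K) = 2*(K+4)^(K+1) := by
  have hk : (Finset.univ.filter (fun f : Fin (K+2) → Fin (K+3) => defect f = 0)).card
      = (Finset.univ.filter (fun f0 : Fin (K+2) → Fin (K+2) => defect f0 ≤ 1)).card
        + (K+2) * (Finset.univ.filter (fun g : Fin (K+1) → Fin (K+2) => defect g = 0)).card :=
    key_identity (m := K+2) (K+1)
  rw [E3_eq K] at hk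
  rw [E2_eq K] at hk
  rw [D_eq (K+2)] at hk
  omega

end Formulas

section Limit
open Filter Topology

lemma aux_inv : Tendsto (fun K : ℕ => 1/((K:ℝ)+3)) atTop (𝓝 0) := by
  have h3 : Tendsto (fun K : ℕ => (K:ℝ)+3) atTop atTop :=
    tendsto_atTop_add_const_right _ 3 tendsto_natCast_atTop_atTop
  simpa [one_div, Pi.inv_def] using h3.inv_tendsto_atTop

lemma aux_base : Tendsto (fun K : ℕ => (1 + 1/((K:ℝ)+3))) atTop (𝓝 1) := by
  simpa using aux_inv.const_add (1:ℝ)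

lemma aux_pow : Tendsto (fun K : ℕ => (1 + 1/((K:ℝ)+3))^(K+1)) atTop (𝓝 (Real.exp 1)) := by
  have hbase := Real.tendsto_one_add_div_pow_exp 1
  have hshift : Tendsto (fun K : ℕ => (1 + 1/((K:ℝ)+3))^(K+3)) atTop (𝓝 (Real.exp 1)) := by
    have h := (Filter.tendsto_add_atTop_iff_nat 3).mpr hbase
    refine Tendsto.congr (fun K => ?_) h
    push_cast
    ring
  have hsq : Tendsto (fun K : ℕ => (1 + 1/((K:ℝ)+3))^2) atTop (𝓝 1) := by
    simpa using aux_base.pow 2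
  have hdiv := hshift.div hsq (by norm_num)
  have heq : ∀ K : ℕ, (1 + 1/((K:ℝ)+3))^(K+3) / (1 + 1/((K:ℝ)+3))^2
      = (1 + 1/((K:ℝ)+3))^(K+1) := by
    intro K
    have hpos : (0:ℝ) < 1 + 1/((K:ℝ)+3) := by positivity
    rw [show K+3 = (K+1)+2 from by omega, pow_add]
    field_simp
  have h2 := Tendsto.congr heq hdiv
  simpa using h2

lemma aux_frac_eq (K : ℕ) : ((K:ℝ)+4)/((K:ℝ)+3) = 1 + 1/((K:ℝ)+3) := by
  have h : ((K:ℝ)+3) ≠ 0 := by positivity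
  field_simp
  ring

lemma aux_lin : Tendsto (fun K : ℕ => 2*((K:ℝ)+2)/((K:ℝ)+3)) atTop (𝓝 2) := by
  have heq : ∀ K : ℕ, 2*((K:ℝ)+2)/((K:ℝ)+3) = 2 - 2*(1/((K:ℝ)+3)) := by
    intro K
    have h : ((K:ℝ)+3) ≠ 0 := by positivity
    field_simp
    ring
  have h2 : Tendsto (fun K : ℕ => 2 - 2*(1/((K:ℝ)+3))) atTop (𝓝 (2 - 2*0)) :=
    tendsto_const_nhds.sub (aux_inv.const_mul 2)
  have h3 := Tendsto.congr (fun K => (heq K).symm) h2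
  simpa using h3

lemma ratio_eq (K : ℕ) :
    (cp' (K+2) (K+2) 1 : ℝ) / (cp' (K+2) (K+2) 0 : ℝ)
      = 2*(((K:ℝ)+4)/((K:ℝ)+3))^(K+1) - 2*((K:ℝ)+2)/((K:ℝ)+3) - 1 := by
  have hA := cp_zero K
  have hB := cp_sum K
  have hx : ((K:ℝ)+3) ≠ 0 := by positivity
  have hpow : (((K:ℝ)+3))^(K+1) ≠ 0 := by positivity
  have hA' : (cp' (K+2) (K+2) 0 : ℝ) = ((K:ℝ)+3)^(K+1) := by
    rw [hA]; push_cast; ring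
  have hB' : (cp' (K+2) (K+2) 1 : ℝ)
      = 2*((K:ℝ)+4)^(K+1) - ((K:ℝ)+2)*(2*((K:ℝ)+3)^K) - ((K:ℝ)+3)^(K+1) := by
    have hc := congrArg (fun t : ℕ => (t : ℝ)) hB
    push_cast at hc
    rw [hA'] at hc
    linarith
  rw [hA', hB', div_pow]
  field_simp
  ring

lemma tendsto_K : Tendsto (fun K : ℕ => (cp' (K+2) (K+2) 1 : ℝ) / (cp' (K+2) (K+2) 0 : ℝ))
    atTop (𝓝 (2*Real.exp 1 - 3)) := by
  have h1 : Tendsto (fun K : ℕ => 2*(((K:ℝ)+4)/((K:ℝ)+3))^(K+1) - 2*((K:ℝ)+2)/((K:ℝ)+3) - 1)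
      atTop (𝓝 (2*Real.exp 1 - 2 - 1)) := by
    apply Tendsto.sub _ tendsto_const_nhds
    apply Tendsto.sub _ aux_lin
    have h := aux_pow.const_mul (2:ℝ)
    refine Tendsto.congr (fun K => ?_) h
    rw [aux_frac_eq]
  have h2 : (2*Real.exp 1 - 2 - 1) = 2*Real.exp 1 - 3 := by ring
  rw [h2] at h1
  exact Tendsto.congr (fun K => (ratio_eq K).symm) h1

end Limit

end Stmt18

open Filter Topology

/-- `lim_{n→∞} cp(n,n,1)/cp(n,n,0) = 2e - 3`. -/
theorem stmt18 :
    Tendsto (fun n : ℕ => (cp n n 1 : ℝ) / (cp n n 0 : ℝ)) atTop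
      (𝓝 (2 * Real.exp 1 - 3)) := by
  apply (Filter.tendsto_add_atTop_iff_nat 2).mp
  exact Stmt18.tendsto_K
end

section
/- For λ ∈ ℝ with λ > 0, the series Σ_{i=0}^{∞} (λ^i/i!)·(i+1)^(i-1)·e^(-λ(1+i)) converges and equals T(λ·e^(-λ))/λ, where T is the tree function (the inverse of t ↦ t·e^(-t) on [0,1]); in particular, for λ ≤ 1 this value equals 1. -/
open Real Filter Set Topology
open scoped ENNReal NNReal

/-- coefficients of the tree function: `tc n = n^(n-1)/n!` for `n ≥ 1`, `tc 0 = 0`. -/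
noncomputable def tc (n : ℕ) : ℝ := (n : ℝ) ^ n / (n * n.factorial)

lemma tc_zero : tc 0 = 0 := by simp [tc]

lemma tc_nonneg (n : ℕ) : 0 ≤ tc n := by
  apply div_nonneg <;> positivity

/-- alternating finite-difference identity -/
lemma altsum : ∀ N : ℕ, ∀ j : ℕ, j < N →
    ∑ k ∈ Finset.range (N + 1), ((-1 : ℝ)) ^ k * (N.choose k) * (k : ℝ) ^ j = 0 := by
  intro N
  induction N with
  | zero => intro j hj; omega
  | succ N ih =>
    intro j hj
    have hjN : j ≤ N := by omega
    set D : ℕ → ℝ := fun t => ∑ k ∈ Finset.range (N + 1),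
      ((-1 : ℝ)) ^ k * (N.choose k) * (k : ℝ) ^ t with hD
    have hDt : ∀ t, t < N → D t = 0 := ih
    set S1 : ℝ := ∑ i ∈ Finset.range (N + 1),
      ((-1 : ℝ)) ^ (i+1) * (N.choose (i+1)) * ((i:ℝ) + 1) ^ j with hS1
    set S2 : ℝ := ∑ i ∈ Finset.range (N + 1),
      ((-1 : ℝ)) ^ i * (N.choose i) * ((i:ℝ) + 1) ^ j with hS2
    set g0 : ℝ := ((-1 : ℝ)) ^ 0 * ((N+1).choose 0) * ((0:ℕ) : ℝ) ^ j with hg0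
    have hpascal : ∀ i : ℕ, ((N+1).choose (i+1) : ℝ) = (N.choose i : ℝ) + (N.choose (i+1) : ℝ) := by
      intro i
      rw [Nat.choose_succ_succ]
      push_cast; ring
    have hsplit : ∑ k ∈ Finset.range (N + 2),
        ((-1 : ℝ)) ^ k * ((N+1).choose k) * (k : ℝ) ^ j = (S1 - S2) + g0 := by
      rw [Finset.sum_range_succ' (fun k => ((-1 : ℝ)) ^ k * ((N+1).choose k) * (k : ℝ) ^ j) (N+1)]
      congr 1
      rw [hS1, hS2, ← Finset.sum_sub_distrib]
      apply Finset.sum_congr rfl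
      intro i _
      rw [hpascal i]
      push_cast
      ring
    have hC : S1 + g0 = D j := by
      have : S1 + g0 = ∑ k ∈ Finset.range (N + 2),
          ((-1 : ℝ)) ^ k * (N.choose k) * (k : ℝ) ^ j := by
        rw [Finset.sum_range_succ' (fun k => ((-1 : ℝ)) ^ k * (N.choose k) * (k : ℝ) ^ j) (N+1)]
        simp [hS1, hg0]
      rw [this, Finset.sum_range_succ]
      simp [Nat.choose_succ_self, hD]
    have hB : S2 = D j := by
      have step : ∀ i ∈ Finset.range (N+1), ((-1 : ℝ)) ^ i * (N.choose i) * ((i:ℝ) + 1) ^ j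
          = ∑ t ∈ Finset.range (j+1), (j.choose t : ℝ) *
              (((-1 : ℝ)) ^ i * (N.choose i) * (i:ℝ) ^ t) := by
        intro i _
        rw [add_pow, Finset.mul_sum]
        apply Finset.sum_congr rfl
        intro t _
        ring
      rw [hS2, Finset.sum_congr rfl step, Finset.sum_comm]
      have swap : ∀ t ∈ Finset.range (j+1),
          (∑ i ∈ Finset.range (N+1), (j.choose t : ℝ) *
            (((-1 : ℝ)) ^ i * (N.choose i) * (i:ℝ) ^ t)) = (j.choose t : ℝ) * D t := by
        intro t _
        rw [hD, Finset.mul_sum]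
      rw [Finset.sum_congr rfl swap, Finset.sum_range_succ]
      have hzero : ∀ t ∈ Finset.range j, (j.choose t : ℝ) * D t = 0 := by
        intro t ht
        rw [hDt t (lt_of_lt_of_le (Finset.mem_range.mp ht) hjN), mul_zero]
      rw [Finset.sum_eq_zero hzero, Nat.choose_self]
      simp
    have : ∑ k ∈ Finset.range (N + 2),
        ((-1 : ℝ)) ^ k * ((N+1).choose k) * (k : ℝ) ^ j = (S1 + g0) - S2 := by
      rw [hsplit]; ring
    rw [this, hC, hB, sub_self]

/-- `n! ≥ √(2n)·(n/e)^n` for `n ≥ 1`. -/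
lemma factorial_lb (n : ℕ) (hn : 1 ≤ n) :
    Real.sqrt (2 * n) * ((n : ℝ) / Real.exp 1) ^ n ≤ (n.factorial : ℝ) := by
  have h1 : (1 : ℝ) ≤ Stirling.stirlingSeq n := by
    obtain ⟨m, rfl⟩ := Nat.exists_eq_add_of_le hn
    have hanti := Stirling.stirlingSeq'_antitone
    have hlim : Tendsto (Stirling.stirlingSeq ∘ Nat.succ) atTop (𝓝 (Real.sqrt π)) :=
      Stirling.tendsto_stirlingSeq_sqrt_pi.comp (tendsto_add_atTop_nat 1)
    have hge : Real.sqrt π ≤ (Stirling.stirlingSeq ∘ Nat.succ) m := hanti.le_of_tendsto hlim m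
    have : (1 : ℝ) ≤ Real.sqrt π := by
      rw [show (1:ℝ) = Real.sqrt 1 by simp]
      exact Real.sqrt_le_sqrt (by linarith [Real.pi_gt_three])
    simpa [Nat.succ_eq_add_one, Nat.add_comm] using le_trans this hge
  have hD : 0 < Real.sqrt (2 * n) * ((n : ℝ) / Real.exp 1) ^ n := by
    have : (0:ℝ) < n := by exact_mod_cast hn
    positivity
  have := (one_le_div hD).mp h1
  simpa [Stirling.stirlingSeq] using this

lemma tc_mul_le (n : ℕ) {x : ℝ} (hx : 0 ≤ x) (hx' : x ≤ Real.exp (-1)) :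
    tc n * x ^ n ≤ ((n : ℝ) ^ (3/2 : ℝ))⁻¹ := by
  rcases Nat.eq_zero_or_pos n with rfl | hn
  · simp [tc]
  have hn1 : (1:ℝ) ≤ (n:ℝ) := by exact_mod_cast hn
  have hnpos : (0:ℝ) < n := by linarith
  have hfac : Real.sqrt (2 * n) * ((n : ℝ) / Real.exp 1) ^ n ≤ (n.factorial : ℝ) :=
    factorial_lb n hn
  have hxn : x ^ n ≤ Real.exp (-1) ^ n := pow_le_pow_left₀ hx hx' n
  have he : Real.exp (-1) ^ n = (Real.exp 1 ^ n)⁻¹ := by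
    rw [← Real.exp_nat_mul, ← Real.exp_nat_mul, ← Real.exp_neg]
    ring_nf
  have h1 : tc n * x ^ n ≤ (n : ℝ) ^ n / (n * n.factorial) * (Real.exp 1 ^ n)⁻¹ := by
    rw [tc, ← he]
    apply mul_le_mul_of_nonneg_left hxn
    positivity
  have h2 : (n : ℝ) ^ n / (n * n.factorial) * (Real.exp 1 ^ n)⁻¹
      ≤ (n : ℝ) ^ n / (n * (Real.sqrt (2 * n) * ((n : ℝ) / Real.exp 1) ^ n)) * (Real.exp 1 ^ n)⁻¹ := by
    apply mul_le_mul_of_nonneg_right _ (by positivity)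
    apply div_le_div_of_nonneg_left (by positivity) (by positivity)
    exact mul_le_mul_of_nonneg_left hfac (by positivity)
  have h3 : (n : ℝ) ^ n / (n * (Real.sqrt (2 * n) * ((n : ℝ) / Real.exp 1) ^ n)) * (Real.exp 1 ^ n)⁻¹
      = ((n:ℝ) * Real.sqrt (2 * n))⁻¹ := by
    rw [div_pow]
    field_simp
  have h4 : ((n:ℝ) ^ (3/2 : ℝ)) ≤ (n:ℝ) * Real.sqrt (2 * n) := by
    have : (n:ℝ) ^ (3/2 : ℝ) = (n:ℝ) * Real.sqrt n := by
      rw [show (3/2 : ℝ) = 1 + 1/2 by norm_num, Real.rpow_add hnpos, Real.rpow_one,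
        Real.sqrt_eq_rpow]
    rw [this]
    apply mul_le_mul_of_nonneg_left _ (by positivity)
    exact Real.sqrt_le_sqrt (by linarith)
  calc tc n * x ^ n ≤ ((n:ℝ) * Real.sqrt (2 * n))⁻¹ := by
        rw [← h3]; exact le_trans h1 h2
    _ ≤ ((n : ℝ) ^ (3/2 : ℝ))⁻¹ := by
        exact inv_anti₀ (Real.rpow_pos_of_pos hnpos _) h4

lemma summable_tc {x : ℝ} (hx : 0 ≤ x) (hx' : x ≤ Real.exp (-1)) :
    Summable (fun n => tc n * x ^ n) := by
  apply Summable.of_nonneg_of_le (fun n => mul_nonneg (tc_nonneg n) (pow_nonneg hx n)) (fun n => tc_mul_le n hx hx')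
  exact Real.summable_nat_rpow_inv.mpr (by norm_num)


/-- the tree function (as a raw sum) -/
noncomputable def Gt : ℝ → ℝ := fun x => ∑' n, tc n * x ^ n

noncomputable def pS : FormalMultilinearSeries ℝ ℝ ℝ :=
  fun n => tc n • ContinuousMultilinearMap.mkPiAlgebraFin ℝ n ℝ

lemma pS_apply (n : ℕ) (x : ℝ) : (pS n) (fun _ => x) = tc n * x ^ n := by
  simp [pS, ContinuousMultilinearMap.mkPiAlgebraFin_apply, List.ofFn_const,
    List.prod_replicate, smul_eq_mul]

lemma pS_sum : pS.sum = Gt := by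
  funext x
  unfold FormalMultilinearSeries.sum Gt
  exact tsum_congr fun n => pS_apply n x

lemma norm_pS_le (n : ℕ) : ‖pS n‖ ≤ tc n := by
  have h := ContinuousMultilinearMap.opNorm_smul_le (tc n)
    (ContinuousMultilinearMap.mkPiAlgebraFin ℝ n ℝ)
  rw [ContinuousMultilinearMap.norm_mkPiAlgebraFin, mul_one,
    Real.norm_eq_abs, abs_of_nonneg (tc_nonneg n)] at h
  exact h

lemma tc_exp_le_one (n : ℕ) : tc n * Real.exp (-1) ^ n ≤ 1 := by
  refine le_trans (tc_mul_le n (Real.exp_pos _).le le_rfl) ?_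
  rcases Nat.eq_zero_or_pos n with rfl | hn
  · simp
  · apply inv_le_one_of_one_le₀
    rw [show (1:ℝ) = 1 ^ (3/2 : ℝ) by simp]
    exact Real.rpow_le_rpow (by norm_num) (by exact_mod_cast hn) (by norm_num)

lemma radius_ge : ENNReal.ofReal (Real.exp (-1)) ≤ pS.radius := by
  have h := pS.le_radius_of_bound 1 (r := Real.toNNReal (Real.exp (-1))) ?_
  · simpa [ENNReal.ofReal] using h
  · intro n
    rw [Real.coe_toNNReal _ (Real.exp_pos _).le]
    refine le_trans (mul_le_mul_of_nonneg_right (norm_pS_le n) (by positivity)) ?_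
    exact tc_exp_le_one n

lemma Gt_analyticAt {x : ℝ} (hx : |x| < Real.exp (-1)) : AnalyticAt ℝ Gt x := by
  have hrad : (0 : ℝ≥0∞) < pS.radius :=
    lt_of_lt_of_le (ENNReal.ofReal_pos.mpr (Real.exp_pos _)) radius_ge
  have hball := pS.hasFPowerSeriesOnBall hrad
  have hmem : x ∈ Metric.eball (0 : ℝ) pS.radius := by
    rw [mem_emetric_ball_zero_iff]
    refine lt_of_lt_of_le ?_ radius_ge
    rw [show (‖x‖ₑ) = ENNReal.ofReal ‖x‖ from (ofReal_norm x).symm]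
    exact ENNReal.ofReal_lt_ofReal_iff_of_nonneg (norm_nonneg _) |>.mpr
      (by rwa [Real.norm_eq_abs])
  exact pS_sum ▸ hball.analyticAt_of_mem hmem

lemma sexp_lt {s : ℝ} (h1 : s ≠ 1) : s * Real.exp (-s) < Real.exp (-1) := by
  have h := Real.add_one_lt_exp (sub_ne_zero.mpr h1)
  have hs : s < Real.exp (s - 1) := by linarith
  calc s * Real.exp (-s) < Real.exp (s - 1) * Real.exp (-s) :=
        mul_lt_mul_of_pos_right hs (Real.exp_pos _)
    _ = Real.exp (-1) := by rw [← Real.exp_add]; ring_nf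

lemma sexp_le (s : ℝ) : s * Real.exp (-s) ≤ Real.exp (-1) := by
  rcases eq_or_ne s 1 with rfl | h
  · simp
  · exact (sexp_lt h).le

lemma quarter_exp_le {s : ℝ} (hs0 : 0 ≤ s) (hs14 : s ≤ 1/4) :
    s * Real.exp s ≤ Real.exp (-1) := by
  have hkey : Real.exp (1/4) * Real.exp 1 < 4 := by
    have h5 : Real.exp (5/4) ^ (4:ℕ) = Real.exp 1 ^ (5:ℕ) := by
      rw [← Real.exp_nat_mul, ← Real.exp_nat_mul]; norm_num
    have hlt : Real.exp (5/4) ^ (4:ℕ) < 4 ^ (4:ℕ) := by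
      rw [h5]
      calc Real.exp 1 ^ (5:ℕ) < 2.7182818286 ^ (5:ℕ) :=
            pow_lt_pow_left₀ Real.exp_one_lt_d9 (Real.exp_pos _).le (by norm_num)
        _ < 4 ^ (4:ℕ) := by norm_num
    have h6 := lt_of_pow_lt_pow_left₀ 4 (by norm_num : (0:ℝ) ≤ 4) hlt
    calc Real.exp (1/4) * Real.exp 1 = Real.exp (5/4) := by rw [← Real.exp_add]; norm_num
      _ < 4 := h6
  have h1 : s * Real.exp s ≤ (1/4) * Real.exp (1/4) :=
    mul_le_mul hs14 (Real.exp_le_exp.mpr hs14) (Real.exp_pos _).le (by norm_num)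
  refine le_trans h1 ?_
  rw [Real.exp_neg]
  have h3 : (0:ℝ) < Real.exp 1 := Real.exp_pos 1
  have h5 := mul_lt_mul_of_pos_right hkey (inv_pos.mpr h3)
  rw [mul_assoc, mul_inv_cancel₀ (ne_of_gt h3), mul_one] at h5
  linarith

lemma term_eq (s : ℝ) {N k : ℕ} (hN : 2 ≤ N) (hk : k ≤ N) :
    tc k * s ^ k * ((-(s * k)) ^ (N - k) / ((N - k).factorial)) =
    ((-1:ℝ))^N * (s^N / N.factorial) * (((-1:ℝ))^k * (N.choose k) * (k:ℝ)^(N-1)) := by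
  rcases Nat.eq_zero_or_pos k with rfl | hk1
  · rw [tc_zero, Nat.cast_zero, zero_pow (show N - 1 ≠ 0 by omega)]
    ring
  · obtain ⟨b, rfl⟩ : ∃ b, k = b + 1 := ⟨k - 1, by omega⟩
    obtain ⟨a, rfl⟩ : ∃ a, N = (b + 1) + a := ⟨N - (b+1), by omega⟩
    have hchoose : (((b+1+a).choose (b+1) : ℝ)) =
        ((b+1+a).factorial : ℝ) / ((b+1).factorial * a.factorial) := by
      rw [Nat.cast_choose ℝ hk, show (b+1+a) - (b+1) = a by omega]
    have hsub1 : (b + 1) + a - (b + 1) = a := by omega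
    have hsub2 : (b + 1) + a - 1 = b + a := by omega
    rw [hsub1, hsub2, hchoose, tc, neg_pow, mul_pow]
    have hf1 : ((b+1).factorial : ℝ) ≠ 0 := by exact_mod_cast (b+1).factorial_ne_zero
    have hf2 : ((a).factorial : ℝ) ≠ 0 := by exact_mod_cast a.factorial_ne_zero
    have hf3 : (((b+1+a)).factorial : ℝ) ≠ 0 := by exact_mod_cast (b+1+a).factorial_ne_zero
    have hb1 : ((b:ℝ) + 1) ≠ 0 := by positivity
    have hneg : ((-1:ℝ))^(b*2) = 1 := by rw [mul_comm, pow_mul]; norm_num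
    push_cast
    field_simp
    ring_nf
    simp only [hneg]
    ring_nf

lemma diag_sum (s : ℝ) (N : ℕ) :
    (∑ p ∈ Finset.HasAntidiagonal.antidiagonal N,
      ((tc p.1 * s ^ p.1) * ((-(s * p.1)) ^ p.2 / ((p.2).factorial : ℝ))))
    = if N = 1 then s else 0 := by
  rw [Finset.Nat.sum_antidiagonal_eq_sum_range_succ_mk]
  match N with
  | 0 => norm_num [tc]
  | 1 =>
    rw [Finset.sum_range_succ, Finset.sum_range_one]
    norm_num [tc]
  | (M + 2) =>
    rw [if_neg (by omega)]
    have key : ∀ k ∈ Finset.range (M + 2 + 1),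
        ((tc k * s ^ k) * ((-(s * k)) ^ (M + 2 - k) / ((M + 2 - k).factorial : ℝ)))
        = ((-1:ℝ))^(M+2) * (s^(M+2) / (M+2).factorial) *
            (((-1:ℝ))^k * ((M+2).choose k) * (k:ℝ)^(M+2-1)) := by
      intro k hk
      have hk' : k ≤ M + 2 := by have := Finset.mem_range.mp hk; omega
      exact term_eq s (by omega) hk' 
    rw [Finset.sum_congr rfl key, ← Finset.mul_sum]
    rw [show M + 2 - 1 = M + 1 by omega]
    rw [altsum (M+2) (M+1) (by omega), mul_zero]

/-- Main rearrangement: for small positive `s`, the tree series at `s·e^(-s)` sums to `s`. -/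
lemma small_hasSum {s : ℝ} (hs0 : 0 < s) (hs14 : s ≤ 1/4) :
    HasSum (fun n => tc n * (s * Real.exp (-s)) ^ n) s := by
  set v := s * Real.exp (-s) with hv
  set F : ℕ × ℕ → ℝ :=
    fun p => (tc p.1 * s ^ p.1) * ((-(s * p.1)) ^ p.2 / ((p.2).factorial : ℝ)) with hF
  have hrow : ∀ n : ℕ, HasSum (fun m => F (n, m)) (tc n * v ^ n) := by
    intro n
    have he : HasSum (fun m => (-(s * n)) ^ m / (m.factorial : ℝ))
        (Real.exp (-(s * n))) := by
      rw [Real.exp_eq_exp_ℝ]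
      exact NormedSpace.expSeries_div_hasSum_exp _
    have h2 := he.mul_left (tc n * s ^ n)
    have hval : (tc n * s ^ n) * Real.exp (-(s * n)) = tc n * v ^ n := by
      rw [hv, mul_pow, ← Real.exp_nat_mul, show ((n:ℝ) * -s) = -(s * n) by ring]
      ring
    rwa [hval] at h2
  have habsrow : ∀ n m, |F (n, m)| = (tc n * s ^ n) * ((s * n) ^ m / (m.factorial : ℝ)) := by
    intro n m
    rw [hF]
    dsimp only
    rw [abs_mul, abs_div, abs_pow, abs_neg,
      abs_of_nonneg (by positivity : (0:ℝ) ≤ s * n),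
      abs_of_nonneg (mul_nonneg (tc_nonneg n) (pow_nonneg hs0.le n)),
      abs_of_nonneg (by positivity : (0:ℝ) ≤ ((m.factorial : ℕ) : ℝ))]
  have hses : s * Real.exp s ≤ Real.exp (-1) := quarter_exp_le hs0.le hs14
  have habs : Summable (fun p => |F p|) := by
    apply (summable_prod_of_nonneg (fun p => abs_nonneg _)).mpr
    constructor
    · intro n
      exact ((Real.summable_pow_div_factorial (s*n)).mul_left (tc n * s ^ n)).congr
        (fun m => (habsrow n m).symm)
    · have hrowsum : ∀ n, ∑' m, |F (n, m)| = tc n * (s * Real.exp s) ^ n := by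
        intro n
        have hexp : ∑' (m:ℕ), (s * (n:ℝ)) ^ m / (m.factorial : ℝ) = Real.exp (s * n) := by
          rw [Real.exp_eq_exp_ℝ]
          exact (NormedSpace.expSeries_div_hasSum_exp (s*(n:ℝ))).tsum_eq
        rw [tsum_congr (habsrow n), tsum_mul_left, hexp, mul_pow, ← Real.exp_nat_mul,
          show ((n:ℝ) * s) = s * n by ring]
        ring
      exact (summable_tc (by positivity) hses).congr (fun n => (hrowsum n).symm)
  have hsumF : Summable F := by
    apply Summable.of_norm
    simpa [Real.norm_eq_abs] using habs
  have hT := hsumF.hasSum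
  set T := ∑' p, F p with hTdef
  have hGsum : HasSum (fun n => tc n * v ^ n) T := hT.prod_fiberwise hrow
  suffices hTs : T = s by rwa [hTs] at hGsum
  have hσ : HasSum (F ∘ (Finset.HasAntidiagonal.sigmaAntidiagonalEquivProd (A := ℕ))) T :=
    (Equiv.hasSum_iff _).mpr hT
  have hdiag : HasSum (fun N => ∑ p ∈ Finset.HasAntidiagonal.antidiagonal N, F p) T := by
    apply hσ.sigma
    intro N
    have h := (Finset.HasAntidiagonal.antidiagonal N).hasSum F
    exact h
  have hdiag' : HasSum (fun N : ℕ => if N = 1 then s else (0:ℝ)) T := by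
    have heq : (fun N => ∑ p ∈ Finset.HasAntidiagonal.antidiagonal N, F p)
        = fun N : ℕ => if N = 1 then s else (0:ℝ) := by
      funext N; exact diag_sum s N
    rwa [heq] at hdiag
  exact hdiag'.unique (hasSum_ite_eq 1 s)


lemma Gt_eq_on : ∀ s ∈ Ioo (0:ℝ) 1, Gt (s * Real.exp (-s)) = s := by
  have hHanal : AnalyticOnNhd ℝ (fun s => Gt (s * Real.exp (-s))) (Ioo (0:ℝ) 1) := by
    intro s hs
    have hinner : AnalyticAt ℝ (fun s : ℝ => s * Real.exp (-s)) s := by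
      have h1 : AnalyticAt ℝ (fun u : ℝ => u) s := analyticAt_id
      have h2 : AnalyticAt ℝ (fun u : ℝ => Real.exp (-u)) s :=
        analyticAt_rexp.comp (analyticAt_id.neg)
      exact h1.mul h2
    have hmem : |s * Real.exp (-s)| < Real.exp (-1) := by
      rw [abs_of_nonneg (mul_nonneg hs.1.le (Real.exp_pos _).le)]
      exact sexp_lt (ne_of_lt hs.2)
    exact AnalyticAt.comp (g := Gt) (f := fun u : ℝ => u * Real.exp (-u))
      (Gt_analyticAt hmem) hinner
  have hid : AnalyticOnNhd ℝ (fun s : ℝ => s) (Ioo (0:ℝ) 1) := fun s _ => analyticAt_id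
  have hsmall : (fun s => Gt (s * Real.exp (-s))) =ᶠ[𝓝 (1/8 : ℝ)] (fun s : ℝ => s) := by
    have hopen : Ioo (0:ℝ) (1/4) ∈ 𝓝 (1/8 : ℝ) := isOpen_Ioo.mem_nhds (by norm_num)
    filter_upwards [hopen] with s hs
    exact (small_hasSum hs.1 hs.2.le).tsum_eq
  exact hHanal.eqOn_of_preconnected_of_eventuallyEq hid isPreconnected_Ioo
    (show (1/8:ℝ) ∈ Ioo (0:ℝ) 1 by norm_num) hsmall

lemma key_lt {s : ℝ} (h0 : 0 < s) (h1 : s < 1) :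
    HasSum (fun n => tc n * (s * Real.exp (-s)) ^ n) s := by
  have hsum := summable_tc (x := s * Real.exp (-s))
    (mul_nonneg h0.le (Real.exp_pos _).le) (sexp_le s)
  have h := hsum.hasSum
  rwa [show (∑' n, tc n * (s * Real.exp (-s)) ^ n) = s from Gt_eq_on s ⟨h0, h1⟩] at h

lemma key_one : HasSum (fun n => tc n * (Real.exp (-1)) ^ n) 1 := by
  have hsum := summable_tc (x := Real.exp (-1)) (Real.exp_pos _).le le_rfl
  have hIoo : Ioo (0:ℝ) 1 ∈ 𝓝[<] (1:ℝ) :=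
    Ioo_mem_nhdsLT (by norm_num : (0:ℝ) < 1)
  have hle : (∑' n, tc n * Real.exp (-1) ^ n) ≤ 1 := by
    apply Summable.tsum_le_of_sum_le hsum
    intro F
    set φ : ℝ → ℝ := fun s => ∑ n ∈ F, tc n * (s * Real.exp (-s)) ^ n with hφ
    have hcont : Continuous φ := by
      apply continuous_finset_sum
      intro n _
      exact continuous_const.mul ((continuous_id.mul (Real.continuous_exp.comp continuous_neg)).pow n)
    have htend : Tendsto φ (𝓝[<] (1:ℝ)) (𝓝 (φ 1)) :=
      (hcont.tendsto 1).mono_left nhdsWithin_le_nhds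
    have htid : Tendsto (fun s : ℝ => s) (𝓝[<] (1:ℝ)) (𝓝 1) :=
      (continuous_id.tendsto 1).mono_left nhdsWithin_le_nhds
    have hev : ∀ᶠ s in 𝓝[<] (1:ℝ), φ s ≤ s := by
      filter_upwards [hIoo] with s hs
      calc φ s ≤ ∑' n, tc n * (s * Real.exp (-s)) ^ n :=
            Summable.sum_le_tsum F (fun n _ => mul_nonneg (tc_nonneg n)
              (pow_nonneg (mul_nonneg hs.1.le (Real.exp_pos _).le) n))
              (summable_tc (mul_nonneg hs.1.le (Real.exp_pos _).le) (sexp_le s))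
        _ = s := Gt_eq_on s hs
    have h1 : φ 1 ≤ 1 := le_of_tendsto_of_tendsto htend htid hev
    calc ∑ n ∈ F, tc n * Real.exp (-1) ^ n = φ 1 := by simp [hφ]
      _ ≤ 1 := h1
  have hge : (1:ℝ) ≤ ∑' n, tc n * Real.exp (-1) ^ n := by
    have htid : Tendsto (fun s : ℝ => s) (𝓝[<] (1:ℝ)) (𝓝 1) :=
      (continuous_id.tendsto 1).mono_left nhdsWithin_le_nhds
    apply le_of_tendsto htid
    filter_upwards [hIoo] with s hs
    calc s = Gt (s * Real.exp (-s)) := (Gt_eq_on s hs).symm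
      _ ≤ ∑' n, tc n * Real.exp (-1) ^ n := by
          apply Summable.tsum_le_tsum _ (summable_tc (mul_nonneg hs.1.le (Real.exp_pos _).le)
            (sexp_le s)) hsum
          intro n
          apply mul_le_mul_of_nonneg_left _ (tc_nonneg n)
          exact pow_le_pow_left₀ (mul_nonneg hs.1.le (Real.exp_pos _).le) (sexp_le s) n
  have heq : (∑' n, tc n * Real.exp (-1) ^ n) = 1 := le_antisymm hle hge
  have h := hsum.hasSum
  rwa [heq] at h

lemma key {s : ℝ} (h0 : 0 < s) (h1 : s ≤ 1) :
    HasSum (fun n => tc n * (s * Real.exp (-s)) ^ n) s := by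
  rcases lt_or_eq_of_le h1 with h | rfl
  · exact key_lt h0 h
  · simpa using key_one

lemma main_sum {lam t : ℝ} (hlam : 0 < lam) (ht0 : 0 < t) (ht1 : t ≤ 1)
    (htv : t * Real.exp (-t) = lam * Real.exp (-lam)) :
    HasSum (fun i : ℕ =>
      lam ^ i / (Nat.factorial i) * ((i : ℝ) + 1) ^ (i - 1) * Real.exp (-lam * (1 + i)))
      (t / lam) := by
  have h := key ht0 ht1
  rw [htv] at h
  have h1 : HasSum (fun n => tc (n+1) * (lam * Real.exp (-lam)) ^ (n+1)) t := by
    apply (hasSum_nat_add_iff (f := fun n => tc n * (lam * Real.exp (-lam)) ^ n) 1).mpr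
    simpa [tc_zero] using h
  have h3 := h1.div_const lam
  have hterm : ∀ i : ℕ, tc (i+1) * (lam * Real.exp (-lam)) ^ (i+1) / lam
      = lam ^ i / (Nat.factorial i) * ((i : ℝ) + 1) ^ (i - 1) * Real.exp (-lam * (1 + i)) := by
    intro i
    have hexp : Real.exp (-lam) ^ (i+1) = Real.exp (-lam * (1 + i)) := by
      rw [← Real.exp_nat_mul]
      congr 1
      push_cast
      ring
    rw [mul_pow, hexp, tc]
    match i with
    | 0 =>
      field_simp
      simp
    | (j + 1) =>
      have hfac : (((j+1+1).factorial : ℕ) : ℝ) = ((j+2:ℕ):ℝ) * ((j+1).factorial : ℝ) := by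
        rw [show j+1+1 = j+2 from rfl, Nat.factorial_succ]
        push_cast
        ring
      have hpow : (((j+1+1 : ℕ)):ℝ) ^ (j+1+1) = (((j+1+1:ℕ)):ℝ) ^ j * (((j+1+1:ℕ)):ℝ) ^ 2 := by
        rw [← pow_add]
      have hne : (((j+1+1:ℕ)):ℝ) ≠ 0 := by positivity
      have hfne : (((j+1).factorial : ℕ) : ℝ) ≠ 0 := by
        exact_mod_cast (j+1).factorial_ne_zero
      rw [hfac, hpow, show (j+1) - 1 = j from rfl]
      push_cast
      field_simp
      ring
  rw [show (fun i : ℕ =>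
      lam ^ i / (Nat.factorial i) * ((i : ℝ) + 1) ^ (i - 1) * Real.exp (-lam * (1 + i)))
    = (fun i : ℕ => tc (i+1) * (lam * Real.exp (-lam)) ^ (i+1) / lam)
    from funext fun i => (hterm i).symm]
  exact h3

/-- For `λ > 0` there is a (unique) `t ∈ [0,1]` with `t·e^(-t) = λ·e^(-λ)`;
then `Σ_{i=0}^{∞} (λ^i/i!)·(i+1)^(i-1)·e^(-λ(1+i))` converges to
`T(λe^(-λ))/λ = t/λ`, and for `λ ≤ 1` one has `t = λ`, so the value is `1`. -/
theorem stmt19 (lam : ℝ) (hlam : 0 < lam) :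
    ∃ t ∈ Set.Icc (0 : ℝ) 1,
      t * Real.exp (-t) = lam * Real.exp (-lam) ∧
      HasSum
        (fun i : ℕ =>
          lam ^ i / (Nat.factorial i) * ((i : ℝ) + 1) ^ (i - 1) * Real.exp (-lam * (1 + i)))
        (t / lam) ∧
      (lam ≤ 1 → t = lam) := by
  by_cases hle : lam ≤ 1
  · exact ⟨lam, ⟨hlam.le, hle⟩, rfl, main_sum hlam hlam hle rfl, fun _ => rfl⟩
  · push_neg at hle
    have hcont : ContinuousOn (fun s : ℝ => s * Real.exp (-s)) (Icc 0 1) :=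
      (continuous_id.mul (Real.continuous_exp.comp continuous_neg)).continuousOn
    have hvmem : lam * Real.exp (-lam) ∈
        Icc ((fun s : ℝ => s * Real.exp (-s)) 0) ((fun s : ℝ => s * Real.exp (-s)) 1) := by
      constructor
      · simp only
        rw [zero_mul]
        positivity
      · simp only
        rw [one_mul]
        exact (sexp_lt (ne_of_gt hle)).le
    obtain ⟨t, htmem, htv⟩ := intermediate_value_Icc (by norm_num : (0:ℝ) ≤ 1) hcont hvmem
    simp only at htv
    have ht1 : t < 1 := by
      rcases lt_or_eq_of_le htmem.2 with h | rfl
      · exact h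
      · exfalso
        rw [one_mul] at htv
        exact absurd htv (ne_of_gt (sexp_lt (ne_of_gt hle)))
    have ht0 : 0 < t := by
      rcases lt_or_eq_of_le htmem.1 with h | rfl
      · exact h
      · exfalso
        rw [zero_mul] at htv
        have : (0:ℝ) < lam * Real.exp (-lam) := by positivity
        linarith
    exact ⟨t, htmem, htv, main_sum hlam ht0 ht1.le htv, fun h => absurd h (not_le.mpr hle)⟩
end
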